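/- arXiv:2508.08834 — 2 statements merged into one kernel-verified Lean document; each statement's English description precedes it below -/
import Mathlib

section
/- For F ∈ ℝ^{3×3} with det F > 0 and μ, λ > 0, the energy W₂(F) := μ(tr(FᵀF) − 3) − μ ln det(FᵀF) + λ(det(FᵀF) − 1)² satisfies W₂(F) ≥ μ · dist²(F, SO(3)), where dist(F, SO(3)) denotes the Euclidean distance from F to the special orthogonal group. -/
open Matrix

/-- squared Frobenius norm -/
noncomputable def frobNorm3 (M : Matrix (Fin 3) (Fin 3) ℝ) : ℝ :=
  Real.sqrt (∑ i, ∑ j, (M i j) ^ 2)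

def SO3 : Set (Matrix (Fin 3) (Fin 3) ℝ) := {R | Rᵀ * R = 1 ∧ R.det = 1}

/-- Euclidean (Frobenius) distance from `F` to `SO(3)`. -/
noncomputable def distSO3 (F : Matrix (Fin 3) (Fin 3) ℝ) : ℝ :=
  sInf {d | ∃ R ∈ SO3, d = frobNorm3 (F - R)}

lemma trace_eq_sum_eig {A : Matrix (Fin 3) (Fin 3) ℝ} (hA : A.IsHermitian) :
    A.trace = ∑ i, hA.eigenvalues i := by
  nth_rewrite 1 [hA.spectral_theorem]
  rw [Unitary.conjStarAlgAut_apply, Matrix.trace_mul_comm, ← Matrix.mul_assoc, Unitary.coe_star_mul_self, Matrix.one_mul,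
    Matrix.trace_diagonal]
  simp

lemma frob_sq_eq_trace (M : Matrix (Fin 3) (Fin 3) ℝ) :
    ∑ i, ∑ j, (M i j) ^ 2 = (Mᵀ * M).trace := by
  simp [Matrix.trace, Matrix.diag, Matrix.mul_apply, sq]
  rw [Finset.sum_comm]

/-- `W₂(F) := μ(tr(FᵀF) − 3) − μ ln det(FᵀF) + λ(det(FᵀF) − 1)²` satisfies
`W₂(F) ≥ μ · dist²(F, SO(3))` whenever `det F > 0`. -/
theorem stmt_2 (μ lam : ℝ) (hμ : 0 < μ) (hlam : 0 < lam)
    (F : Matrix (Fin 3) (Fin 3) ℝ) (hdet : 0 < F.det) :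
    μ * ((Fᵀ * F).trace - 3) - μ * Real.log (Fᵀ * F).det
      + lam * ((Fᵀ * F).det - 1) ^ 2 ≥ μ * (distSO3 F) ^ 2 := by
  have hC : (Fᵀ * F).PosSemidef := by
    have := Matrix.posSemidef_conjTranspose_mul_self F
    rwa [Matrix.conjTranspose_eq_transpose_of_trivial] at this
  obtain ⟨S, hS, hSS⟩ : ∃ S : Matrix (Fin 3) (Fin 3) ℝ, S.PosSemidef ∧ S * S = Fᵀ * F := by
    open scoped MatrixOrder in
    exact ⟨CFC.sqrt (Fᵀ * F), (CFC.sqrt_nonneg _).posSemidef, CFC.sqrt_mul_sqrt_self _ hC.nonneg⟩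
  set ev := hS.1.eigenvalues with hevdef
  have hev0 : ∀ i, 0 ≤ ev i := hS.eigenvalues_nonneg
  have htrS : S.trace = ∑ i, ev i := trace_eq_sum_eig hS.1
  have hdetS : S.det = ∏ i, ev i := by
    simpa using hS.1.det_eq_prod_eigenvalues
  have hdetC : (Fᵀ * F).det = F.det ^ 2 := by rw [Matrix.det_mul, Matrix.det_transpose, sq]
  have hdetSsq : S.det ^ 2 = F.det ^ 2 := by
    rw [← hdetC, ← hSS, Matrix.det_mul, sq]
  have hdetSnn : 0 ≤ S.det := hdetS ▸ Finset.prod_nonneg fun i _ => hev0 i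
  have hdetSF : S.det = F.det := by
    nlinarith [hdetSsq, hdetSnn, hdet]
  have hdetSpos : 0 < S.det := hdetSF ▸ hdet
  have hevpos : ∀ i, 0 < ev i := by
    intro i
    rcases lt_or_eq_of_le (hev0 i) with h | h
    · exact h
    · exfalso
      have : S.det = 0 := by
        rw [hdetS]
        exact Finset.prod_eq_zero (Finset.mem_univ i) h.symm
      exact hdetSpos.ne' this
  have hSdetne : S.det ≠ 0 := hdetSpos.ne'
  have hSinv : S⁻¹ * S = 1 := Matrix.nonsing_inv_mul S (isUnit_iff_ne_zero.mpr hSdetne)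
  have hSinv' : S * S⁻¹ = 1 := Matrix.mul_nonsing_inv S (isUnit_iff_ne_zero.mpr hSdetne)
  have hSsymm : Sᵀ = S := by
    rw [← Matrix.conjTranspose_eq_transpose_of_trivial]; exact hS.1
  set R := F * S⁻¹ with hRdef
  have hRF : Rᵀ * F = S := by
    rw [hRdef, Matrix.transpose_mul, Matrix.transpose_nonsing_inv, hSsymm, Matrix.mul_assoc,
      ← hSS, ← Matrix.mul_assoc, hSinv, Matrix.one_mul]
  have hRtR : Rᵀ * R = 1 := by
    rw [hRdef, ← Matrix.mul_assoc, ← hRdef, hRF, hSinv']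
  have hRdet : R.det = 1 := by
    rw [hRdef, Matrix.det_mul, Matrix.det_nonsing_inv, hdetSF,
      Ring.inverse_eq_inv, mul_inv_cancel₀ hdet.ne']
  have hFtR : (Fᵀ * R).trace = S.trace := by
    rw [← Matrix.trace_transpose, Matrix.transpose_mul, Matrix.transpose_transpose, hRF]
  have htraceM : ((F - R)ᵀ * (F - R)).trace = (Fᵀ * F).trace - 2 * S.trace + 3 := by
    rw [Matrix.transpose_sub, Matrix.sub_mul, Matrix.mul_sub, Matrix.mul_sub,
      Matrix.trace_sub, Matrix.trace_sub, Matrix.trace_sub, hFtR, hRF, hRtR, Matrix.trace_one]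
    norm_num
    ring
  -- distance bound
  have hmem : frobNorm3 (F - R) ∈ {d | ∃ R' ∈ SO3, d = frobNorm3 (F - R')} :=
    ⟨R, ⟨hRtR, hRdet⟩, rfl⟩
  have hbdd : BddBelow {d | ∃ R' ∈ SO3, d = frobNorm3 (F - R')} := by
    refine ⟨0, fun d hd => ?_⟩
    obtain ⟨R', _, rfl⟩ := hd
    exact Real.sqrt_nonneg _
  have hdist_le : distSO3 F ≤ frobNorm3 (F - R) := csInf_le hbdd hmem
  have hdist_nn : 0 ≤ distSO3 F := by
    apply Real.sInf_nonneg
    rintro d ⟨R', _, rfl⟩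
    exact Real.sqrt_nonneg _
  have hfrob_nn : (0:ℝ) ≤ ∑ i, ∑ j, ((F - R) i j) ^ 2 :=
    Finset.sum_nonneg fun i _ => Finset.sum_nonneg fun j _ => sq_nonneg _
  have hfrobsq : (frobNorm3 (F - R)) ^ 2 = (Fᵀ * F).trace - 2 * S.trace + 3 := by
    rw [frobNorm3, Real.sq_sqrt hfrob_nn, frob_sq_eq_trace, htraceM]
  have hsq : (distSO3 F) ^ 2 ≤ (Fᵀ * F).trace - 2 * S.trace + 3 := by
    rw [← hfrobsq]
    exact pow_le_pow_left₀ hdist_nn hdist_le 2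
  -- log bound
  have hlog : Real.log (Fᵀ * F).det ≤ 2 * S.trace - 6 := by
    have h1 : Real.log (Fᵀ * F).det = 2 * Real.log S.det := by
      rw [← hSS, Matrix.det_mul, ← sq, Real.log_pow]
      norm_num
    have h2 : Real.log S.det ≤ S.trace - 3 := by
      rw [hdetS, Real.log_prod fun i _ => (hevpos i).ne', htrS]
      have : ∑ i, Real.log (ev i) ≤ ∑ i, (ev i - 1) :=
        Finset.sum_le_sum fun i _ => Real.log_le_sub_one_of_pos (hevpos i)
      calc ∑ i, Real.log (ev i) ≤ ∑ i, (ev i - 1) := this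
        _ = (∑ i, ev i) - 3 := by rw [Finset.sum_sub_distrib]; norm_num
    linarith
  nlinarith [sq_nonneg ((Fᵀ * F).det - 1), mul_le_mul_of_nonneg_left hsq hμ.le,
    mul_le_mul_of_nonneg_left hlog hμ.le, hlam.le]
end

section
/- For any F ∈ ℝ^{3×3} with det F > 0, the Euclidean distance from F to SO(3) equals the Frobenius norm |√(FᵀF) − Id|, where √(FᵀF) is the positive definite square root of FᵀF. -/
open Matrix

lemma sumsq_eq_trace (M : Matrix (Fin 3) (Fin 3) ℝ) :
    (∑ i, ∑ j, (M i j) ^ 2) = (Mᵀ * M).trace := by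
  simp only [Matrix.trace, Matrix.diag, Matrix.mul_apply, Matrix.transpose_apply, pow_two]
  rw [Finset.sum_comm]

lemma frob_eq_trace (M : Matrix (Fin 3) (Fin 3) ℝ) :
    frobNorm3 M = Real.sqrt ((Mᵀ * M).trace) := by
  rw [frobNorm3, sumsq_eq_trace]

/-- entries of an orthogonal matrix are bounded by 1 in square -/
lemma entry_sq_le_one {Q : Matrix (Fin 3) (Fin 3) ℝ} (hQ : Qᵀ * Q = 1)
    (i j : Fin 3) : (Q i j) ^ 2 ≤ 1 := by
  have h := congrFun (congrFun hQ j) j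
  simp only [Matrix.mul_apply, Matrix.transpose_apply, Matrix.one_apply_eq] at h
  calc (Q i j) ^ 2 ≤ ∑ k, Q k j * Q k j := by
        rw [pow_two]
        exact Finset.single_le_sum (f := fun k => Q k j * Q k j)
          (fun k _ => mul_self_nonneg _) (Finset.mem_univ i)
    _ = 1 := h

/-- key trace inequality: for S posdef and U orthogonal, tr(SU) ≤ tr(S) -/
lemma trace_mul_orth_le {S U : Matrix (Fin 3) (Fin 3) ℝ} (hS : S.PosDef)
    (hU : Uᵀ * U = 1) : (S * U).trace ≤ S.trace := by
  classical
  have hH : S.IsHermitian := hS.1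
  set V : Matrix (Fin 3) (Fin 3) ℝ := (hH.eigenvectorUnitary : Matrix (Fin 3) (Fin 3) ℝ) with hV
  have hstarV : star V = Vᵀ := Matrix.conjTranspose_eq_transpose_of_trivial V
  have hVV' : V * Vᵀ = 1 := by
    rw [← hstarV]; exact (Matrix.mem_unitaryGroup_iff).mp hH.eigenvectorUnitary.2
  have hV'V : Vᵀ * V = 1 := by
    rw [← hstarV]; exact (Matrix.mem_unitaryGroup_iff').mp hH.eigenvectorUnitary.2
  set d : Fin 3 → ℝ := hH.eigenvalues with hd
  have hspec : S = V * Matrix.diagonal d * Vᵀ := by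
    have := hH.spectral_theorem
    rw [Unitary.conjStarAlgAut_apply, ← hV, hstarV] at this
    simpa using this
  have hdnonneg : ∀ i, 0 ≤ d i := fun i => le_of_lt (hS.eigenvalues_pos i)
  set W : Matrix (Fin 3) (Fin 3) ℝ := Vᵀ * U * V with hW
  have hWorth : Wᵀ * W = 1 := by
    have : Wᵀ = Vᵀ * Uᵀ * V := by
      rw [hW]; simp [Matrix.transpose_mul, mul_assoc]
    rw [this, hW]
    calc Vᵀ * Uᵀ * V * (Vᵀ * U * V)
        = Vᵀ * Uᵀ * (V * Vᵀ) * U * V := by noncomm_ring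
      _ = Vᵀ * (Uᵀ * U) * V := by rw [hVV']; noncomm_ring
      _ = 1 := by rw [hU, mul_one, hV'V]
  have htrace1 : (S * U).trace = (Matrix.diagonal d * W).trace := by
    rw [hspec, hW]
    calc (V * Matrix.diagonal d * Vᵀ * U).trace
        = (Matrix.diagonal d * Vᵀ * U * V).trace := by
          rw [show V * Matrix.diagonal d * Vᵀ * U = V * (Matrix.diagonal d * Vᵀ * U) by
            noncomm_ring, Matrix.trace_mul_comm]
      _ = (Matrix.diagonal d * (Vᵀ * U * V)).trace := by noncomm_ring
  have htrace2 : S.trace = ∑ i, d i := by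
    rw [hspec, Matrix.trace_mul_comm, ← mul_assoc, hV'V, one_mul, Matrix.trace_diagonal]
  have htrace3 : (Matrix.diagonal d * W).trace = ∑ i, d i * W i i := by
    simp [Matrix.trace, Matrix.diag, Matrix.diagonal_mul]
  rw [htrace1, htrace2, htrace3]
  apply Finset.sum_le_sum
  intro i _
  have h1 : (W i i) ^ 2 ≤ 1 := entry_sq_le_one hWorth i i
  have h2 : W i i ≤ 1 := by nlinarith
  calc d i * W i i ≤ d i * 1 := mul_le_mul_of_nonneg_left h2 (hdnonneg i)
    _ = d i := mul_one _

/-- For `F` with `det F > 0`, the distance from `F` to `SO(3)` equals `|√(FᵀF) − Id|`,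
where `S = √(FᵀF)` is the positive definite square root of `FᵀF`. -/
theorem stmt_3 (F S : Matrix (Fin 3) (Fin 3) ℝ) (hdet : 0 < F.det)
    (hS : S.PosDef) (hSsq : S * S = Fᵀ * F) :
    distSO3 F = frobNorm3 (S - 1) := by
  classical
  have hSsym : Sᵀ = S := by
    ext i j
    have := congrFun (congrFun hS.1 i) j
    simpa using this
  have hSdet : 0 < S.det := hS.det_pos
  have hSunit : IsUnit S.det := isUnit_iff_ne_zero.mpr (ne_of_gt hSdet)
  have hSinv : S⁻¹ * S = 1 := Matrix.nonsing_inv_mul S hSunit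
  have hSinv' : S * S⁻¹ = 1 := Matrix.mul_nonsing_inv S hSunit
  set R : Matrix (Fin 3) (Fin 3) ℝ := F * S⁻¹ with hR
  have hRS : R * S = F := by rw [hR, mul_assoc, hSinv, mul_one]
  have hSinvT : (S⁻¹)ᵀ = S⁻¹ := by rw [Matrix.transpose_nonsing_inv, hSsym]
  have hRtR : Rᵀ * R = 1 := by
    rw [hR, Matrix.transpose_mul, hSinvT]
    calc S⁻¹ * Fᵀ * (F * S⁻¹) = S⁻¹ * (Fᵀ * F) * S⁻¹ := by noncomm_ring
      _ = S⁻¹ * (S * S) * S⁻¹ := by rw [hSsq]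
      _ = (S⁻¹ * S) * (S * S⁻¹) := by noncomm_ring
      _ = 1 := by rw [hSinv, hSinv', one_mul]
  have hRRt : R * Rᵀ = 1 := mul_eq_one_comm.mp hRtR
  have hRdetpos : 0 < R.det := by
    rw [hR, Matrix.det_mul, Matrix.det_nonsing_inv, Ring.inverse_eq_inv']
    exact mul_pos hdet (inv_pos.mpr hSdet)
  have hRdetsq : R.det ^ 2 = 1 := by
    have h := congrArg Matrix.det hRtR
    rwa [Matrix.det_mul, Matrix.det_transpose, Matrix.det_one, ← pow_two] at h
  have hRdet : R.det = 1 := by nlinarith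
  have hRmem : R ∈ SO3 := ⟨hRtR, hRdet⟩
  have hFR : F - R = R * (S - 1) := by rw [mul_sub, hRS, mul_one]
  -- Frobenius norm of F - R equals that of S - 1
  have hfrobR : frobNorm3 (F - R) = frobNorm3 (S - 1) := by
    rw [frob_eq_trace, frob_eq_trace, hFR]
    congr 1
    rw [Matrix.transpose_mul]
    calc ((S - 1)ᵀ * Rᵀ * (R * (S - 1))).trace
        = ((S - 1)ᵀ * (Rᵀ * R) * (S - 1)).trace := by noncomm_ring
      _ = ((S - 1)ᵀ * (S - 1)).trace := by rw [hRtR, mul_one]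
  -- the lower bound
  have hlb : ∀ Q ∈ SO3, frobNorm3 (S - 1) ≤ frobNorm3 (F - Q) := by
    intro Q hQ
    obtain ⟨hQorth, _⟩ := hQ
    rw [frob_eq_trace, frob_eq_trace]
    apply Real.sqrt_le_sqrt
    have hQQ : (Qᵀ * Q).trace = 3 := by rw [hQorth]; simp [Matrix.trace_one]
    have hexp1 : ((F - Q)ᵀ * (F - Q)).trace
        = (Fᵀ * F).trace - 2 * (Fᵀ * Q).trace + 3 := by
      have hQF : (Qᵀ * F).trace = (Fᵀ * Q).trace := by
        rw [← Matrix.trace_transpose (Qᵀ * F), Matrix.transpose_mul, Matrix.transpose_transpose]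
      rw [Matrix.transpose_sub, Matrix.sub_mul, Matrix.mul_sub, Matrix.mul_sub]
      rw [Matrix.trace_sub, Matrix.trace_sub, Matrix.trace_sub, hQF, hQQ]
      ring
    have hexp2 : ((S - 1)ᵀ * (S - 1)).trace
        = (Fᵀ * F).trace - 2 * S.trace + 3 := by
      rw [Matrix.transpose_sub, hSsym, Matrix.transpose_one]
      rw [Matrix.sub_mul, Matrix.mul_sub, Matrix.mul_sub, Matrix.trace_sub,
        Matrix.trace_sub, Matrix.trace_sub, hSsq]
      simp [Matrix.trace_one]
      ring
    rw [hexp1, hexp2]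
    have hkey : (Fᵀ * Q).trace ≤ S.trace := by
      have hF : Fᵀ = S * Rᵀ := by
        rw [← hRS, Matrix.transpose_mul, hSsym]
      have hUorth : (Rᵀ * Q)ᵀ * (Rᵀ * Q) = 1 := by
        rw [Matrix.transpose_mul, Matrix.transpose_transpose]
        calc Qᵀ * R * (Rᵀ * Q) = Qᵀ * (R * Rᵀ) * Q := by noncomm_ring
          _ = 1 := by rw [hRRt, mul_one, hQorth]
      have := trace_mul_orth_le hS hUorth
      rw [hF, mul_assoc]
      exact this
    linarith
  -- conclude via sInf
  have hmem : frobNorm3 (S - 1) ∈ {d | ∃ R' ∈ SO3, d = frobNorm3 (F - R')} :=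
    ⟨R, hRmem, hfrobR.symm⟩
  have hlb' : ∀ d ∈ {d | ∃ R' ∈ SO3, d = frobNorm3 (F - R')}, frobNorm3 (S - 1) ≤ d := by
    rintro d ⟨Q, hQ, rfl⟩
    exact hlb Q hQ
  refine le_antisymm ?_ ?_
  · exact csInf_le ⟨frobNorm3 (S - 1), hlb'⟩ hmem
  · exact le_csInf ⟨_, hmem⟩ hlb'
end
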